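/- (Step-0 commitment, gradient form.) Fix a horizon H ≥ 2, a damage rate κ > 0, a reward exponent β ∈ (0,1], and effort levels 0 < e_L < e_H ≤ 1 with κ·H·e_H ≤ 1. Suppose the commitment condition e_H^β − e_L^β > 2(H−1)·κ·ē_β·(e_H − e_L) holds, where ē_β = (e_L^β + e_H^β)/2. Define J(θ) = σ(θ)·Q(e_H) + (1 − σ(θ))·Q(e_L), where σ is the logistic sigmoid and Q(e) = e^β + V(κe) with V the uniform-policy continuation value. Then the derivative of J at θ = 0 is strictly positive. -/

import Mathlib

/-- Continuation return along effort sequence `e` from initial damage `d`. -/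
noncomputable def contReturn (H : ℕ) (κ β : ℝ) (e : ℕ → ℝ) (d : ℝ) : ℝ :=
  ∑ t ∈ Finset.range (H - 1),
    (e t) ^ β * (1 - (d + κ * ∑ s ∈ Finset.range t, e s)) ^ 2

/-- Uniform-policy continuation value: the average of `contReturn` over all
`2^(H-1)` effort sequences with values in `{eL, eH}`, encoded by
`c : Fin (H-1) → Bool` (`true ↦ eH`, `false ↦ eL`). -/
noncomputable def contValue (H : ℕ) (κ β eL eH : ℝ) (d : ℝ) : ℝ :=
  (2 : ℝ) ^ (-((H : ℤ) - 1)) *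
    ∑ c : Fin (H - 1) → Bool,
      contReturn H κ β
        (fun t => if ht : t < H - 1 then (if c ⟨t, ht⟩ then eH else eL) else 0) d

/-- State-action value at zero damage: `Q(e) = e^β + V(κ e)`. -/
noncomputable def Qval (H : ℕ) (κ β eL eH : ℝ) (e : ℝ) : ℝ :=
  e ^ β + contValue H κ β eL eH (κ * e)

/-- The logistic sigmoid `σ(θ) = 1 / (1 + exp(-θ))`. -/
noncomputable def sigmoid (θ : ℝ) : ℝ := 1 / (1 + Real.exp (-θ))

lemma sum_eval (n : ℕ) (i : Fin n) (h : Bool → ℝ) :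
    ∑ c : Fin n → Bool, h (c i) = 2 ^ n * (h false + h true) / 2 := by
  have hinv : Function.Involutive
      (fun c : Fin n → Bool => Function.update c i (! c i)) := by
    intro c
    funext j
    by_cases hj : j = i
    · subst hj; simp
    · simp [Function.update_of_ne hj]
  have h1 : ∑ c : Fin n → Bool, h (c i) = ∑ c : Fin n → Bool, h (! c i) := by
    apply Fintype.sum_equiv (hinv.toPerm _)
    intro c
    simp [Function.Involutive.toPerm]
  have h2 : ∑ c : Fin n → Bool, (h (c i) + h (! c i))
      = 2 ^ n * (h false + h true) := by
    have hc : ∀ c : Fin n → Bool, h (c i) + h (! c i) = h false + h true := by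
      intro c; cases hcc : c i <;> simp; ring
    rw [Finset.sum_congr rfl (fun c _ => hc c), Finset.sum_const]
    simp [Finset.card_univ]
    ring
  rw [Finset.sum_add_distrib] at h2
  linarith

theorem stmt_5 (H : ℕ) (hH : 2 ≤ H) (κ β eL eH : ℝ)
    (hκ : 0 < κ) (hβ0 : 0 < β) (hβ1 : β ≤ 1)
    (heL : 0 < eL) (hLH : eL < eH) (heH : eH ≤ 1)
    (hbound : κ * (H : ℝ) * eH ≤ 1)
    (hcommit : eH ^ β - eL ^ β >
      2 * ((H : ℝ) - 1) * κ * ((eL ^ β + eH ^ β) / 2) * (eH - eL)) :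
    0 < deriv (fun θ : ℝ =>
      sigmoid θ * Qval H κ β eL eH eH + (1 - sigmoid θ) * Qval H κ β eL eH eL) 0 := by
  -- derivative computation
  have hsig : HasDerivAt sigmoid (1/4) 0 := by
    have h1 : HasDerivAt (fun θ : ℝ => 1 + Real.exp (-θ)) (-1) 0 := by
      have h0 : HasDerivAt (fun θ : ℝ => Real.exp (-θ)) (-1) 0 := by
        simpa using ((hasDerivAt_id (0:ℝ)).neg.exp)
      simpa using h0.const_add 1
    have h2 : (1 + Real.exp (-(0:ℝ))) ≠ 0 := by positivity
    have h3 := h1.inv h2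
    have h4 : HasDerivAt (fun θ : ℝ => (1 + Real.exp (-θ))⁻¹) (1/4) 0 := by
      refine h3.congr_deriv ?_
      simp [Real.exp_zero]
      norm_num
    have he : sigmoid = fun θ : ℝ => (1 + Real.exp (-θ))⁻¹ := by
      funext θ; simp [sigmoid, one_div]
    rw [he]; exact h4
  set A := Qval H κ β eL eH eH with hA
  set B := Qval H κ β eL eH eL with hB
  have hd : HasDerivAt (fun θ : ℝ => sigmoid θ * A + (1 - sigmoid θ) * B)
      (1/4 * (A - B)) 0 := by
    have h5 := (hsig.mul_const A).add (((hasDerivAt_const (0:ℝ) (1:ℝ)).sub hsig).mul_const B)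
    refine h5.congr_deriv ?_
    ring
  rw [hd.deriv]
  -- main inequality : 0 < A - B
  have hAB : 0 < A - B := by
    set n := H - 1 with hn
    have hn1 : 1 ≤ n := by omega
    have hHn : ((H : ℤ) - 1) = (n : ℤ) := by omega
    have hHnR : ((H : ℝ) - 1) = (n : ℝ) := by
      have : (H : ℝ) = (n : ℝ) + 1 := by
        have : H = n + 1 := by omega
        rw [this]; push_cast; ring
      linarith
    set P : ℝ := (2 : ℝ) ^ (-((H : ℤ) - 1)) with hPdef
    have hP : P * (2 : ℝ) ^ n = 1 := by
      rw [hPdef, hHn, zpow_neg, zpow_natCast]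
      have : ((2:ℝ)^n) ≠ 0 := by positivity
      field_simp
    set eF : (Fin n → Bool) → ℕ → ℝ :=
      fun c t => if ht : t < H - 1 then (if c ⟨t, ht⟩ then eH else eL) else 0 with heF
    have heF_nonneg : ∀ c t, 0 ≤ eF c t := by
      intro c t
      rw [heF]
      dsimp only
      split
      · split <;> [linarith; linarith]
      · exact le_refl _
    -- pointwise bound per effort sequence
    have key : ∀ c : Fin n → Bool,
        contReturn H κ β (eF c) (κ * eL) - contReturn H κ β (eF c) (κ * eH)
          ≤ ∑ t ∈ Finset.range n, (eF c t) ^ β * (2 * κ * (eH - eL)) := by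
      intro c
      rw [contReturn, contReturn, ← Finset.sum_sub_distrib]
      apply Finset.sum_le_sum
      intro t ht
      set S := ∑ s ∈ Finset.range t, eF c s with hS
      have hS0 : 0 ≤ S := Finset.sum_nonneg fun s _ => heF_nonneg c s
      have hpow : 0 ≤ (eF c t) ^ β := Real.rpow_nonneg (heF_nonneg c t) β
      rw [← mul_sub]
      apply mul_le_mul_of_nonneg_left _ hpow
      have hprod : 0 ≤ κ * (eH - eL) * (κ * eL + κ * eH + 2 * κ * S) := by
        have h1 : 0 ≤ κ * (eH - eL) := by nlinarith
        have h2 : 0 ≤ κ * eL + κ * eH + 2 * κ * S := by nlinarith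
        exact mul_nonneg h1 h2
      nlinarith [hprod]
    -- sum over sequences
    have hrow : ∀ t ∈ Finset.range n, (∑ c : Fin n → Bool, (eF c t) ^ β)
        = 2 ^ n * ((eL ^ β + eH ^ β) / 2) := by
      intro t ht
      rw [Finset.mem_range] at ht
      have ht' : t < H - 1 := ht
      have hcong : ∀ c : Fin n → Bool,
          (eF c t) ^ β = (if c ⟨t, ht'⟩ then eH else eL) ^ β := by
        intro c; rw [heF]; dsimp only; rw [dif_pos ht']
      have hse := sum_eval n ⟨t, ht'⟩ (fun b => (if b then eH else eL) ^ β)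
      rw [Finset.sum_congr rfl fun c _ => hcong c, hse]
      norm_num
      ring
    have hsum : (∑ c : Fin n → Bool,
          (contReturn H κ β (eF c) (κ * eL) - contReturn H κ β (eF c) (κ * eH)))
        ≤ (n : ℝ) * (2 ^ n * ((eL ^ β + eH ^ β) / 2)) * (2 * κ * (eH - eL)) := by
      calc (∑ c : Fin n → Bool,
            (contReturn H κ β (eF c) (κ * eL) - contReturn H κ β (eF c) (κ * eH)))
          ≤ ∑ c : Fin n → Bool, ∑ t ∈ Finset.range n,
              (eF c t) ^ β * (2 * κ * (eH - eL)) :=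
            Finset.sum_le_sum fun c _ => key c
        _ = ∑ t ∈ Finset.range n, ∑ c : Fin n → Bool,
              (eF c t) ^ β * (2 * κ * (eH - eL)) := Finset.sum_comm
        _ = ∑ t ∈ Finset.range n,
              (2 ^ n * ((eL ^ β + eH ^ β) / 2)) * (2 * κ * (eH - eL)) := by
            apply Finset.sum_congr rfl
            intro t ht
            rw [← Finset.sum_mul, hrow t ht]
        _ = (n : ℝ) * (2 ^ n * ((eL ^ β + eH ^ β) / 2)) * (2 * κ * (eH - eL)) := by
            rw [Finset.sum_const, Finset.card_range]
            push_cast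
            ring
    have hQA : A = eH ^ β + P * ∑ c : Fin n → Bool, contReturn H κ β (eF c) (κ * eH) := rfl
    have hQB : B = eL ^ β + P * ∑ c : Fin n → Bool, contReturn H κ β (eF c) (κ * eL) := rfl
    have hP0 : 0 < P := by rw [hPdef]; positivity
    have hdiff : A - B ≥ (eH ^ β - eL ^ β)
        - P * ((n : ℝ) * (2 ^ n * ((eL ^ β + eH ^ β) / 2)) * (2 * κ * (eH - eL))) := by
      rw [hQA, hQB]
      have h6 : (∑ c : Fin n → Bool, contReturn H κ β (eF c) (κ * eH))
          - (∑ c : Fin n → Bool, contReturn H κ β (eF c) (κ * eL))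
          ≥ -((n : ℝ) * (2 ^ n * ((eL ^ β + eH ^ β) / 2)) * (2 * κ * (eH - eL))) := by
        have hsplit : (∑ c : Fin n → Bool,
            (contReturn H κ β (eF c) (κ * eL) - contReturn H κ β (eF c) (κ * eH)))
            = (∑ c : Fin n → Bool, contReturn H κ β (eF c) (κ * eL))
              - ∑ c : Fin n → Bool, contReturn H κ β (eF c) (κ * eH) :=
          Finset.sum_sub_distrib _ _
        linarith [hsum, hsplit.ge, hsplit.le]
      nlinarith [mul_le_mul_of_nonneg_left h6 hP0.le]
    have hPval : P * ((n : ℝ) * (2 ^ n * ((eL ^ β + eH ^ β) / 2)) * (2 * κ * (eH - eL)))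
        = 2 * (n : ℝ) * κ * ((eL ^ β + eH ^ β) / 2) * (eH - eL) := by
      linear_combination ((n : ℝ) * ((eL ^ β + eH ^ β) / 2) * (2 * κ * (eH - eL))) * hP
    rw [hHnR] at hcommit
    linarith [hdiff, hPval.le, hPval.ge]
  linarith
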